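/- Let p be a probability density on R^n, σ > 0, and let p_σ(x_σ) = ∫ G_σ(x_σ - x) p(x) dx be the convolution of p with the Gaussian density G_σ of covariance σ²I. Then the posterior mean satisfies Tweedie's formula: E[x | x_σ] = x_σ + σ² ∇ log p_σ(x_σ). -/
import Mathlib


open MeasureTheory Real

/-- The Gaussian density `G_σ` on `ℝⁿ` with covariance `σ² I`. -/
noncomputable def gaussDens (n : ℕ) (σ : ℝ) (v : EuclideanSpace ℝ (Fin n)) : ℝ :=
  (2 * Real.pi * σ ^ 2) ^ (-(n : ℝ) / 2) * Real.exp (-‖v‖ ^ 2 / (2 * σ ^ 2))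

/-- **Tweedie's formula.** If `p` is a probability density on `ℝⁿ`, `σ > 0`,
`p_σ = G_σ * p` is the Gaussian smoothing of `p`, and `M y = E[x | x_σ = y]` is the
posterior mean (written as a ratio of integrals), then wherever `p_σ > 0`,
`E[x | x_σ] = x_σ + σ² ∇ log p_σ(x_σ)`.  Differentiation under the integral sign
is assumed valid via the hypothesis `hgrad`. -/
theorem tweedie_formula (n : ℕ) (σ : ℝ) (hσ : 0 < σ)
    (p : EuclideanSpace ℝ (Fin n) → ℝ)
    (hp0 : ∀ x, 0 ≤ p x)
    (hp1 : ∫ x, p x = 1)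
    (pσ : EuclideanSpace ℝ (Fin n) → ℝ)
    (hpσ : ∀ y, pσ y = ∫ x, gaussDens n σ (y - x) * p x)
    (hInt : ∀ y, Integrable (fun x => (gaussDens n σ (y - x) * p x) • x))
    (hgrad : ∀ y, HasGradientAt pσ
      (∫ x, (gaussDens n σ (y - x) * p x) • ((σ ^ 2)⁻¹ • (x - y))) y)
    (M : EuclideanSpace ℝ (Fin n) → EuclideanSpace ℝ (Fin n))
    (hM : ∀ y, M y = (pσ y)⁻¹ • ∫ x, (gaussDens n σ (y - x) * p x) • x) :
    ∀ y, 0 < pσ y →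
      M y = y + σ ^ 2 • gradient (fun u => Real.log (pσ u)) y := by
  intro y hpos
  have hσ2 : (σ : ℝ) ^ 2 ≠ 0 := pow_ne_zero 2 hσ.ne'
  have hne : pσ y ≠ 0 := hpos.ne'
  set f : EuclideanSpace ℝ (Fin n) → ℝ := fun x => gaussDens n σ (y - x) * p x with hf
  -- integrability of f
  have hI : Integrable f := by
    by_contra h
    rw [hpσ y, integral_undef h] at hpos
    exact lt_irrefl _ hpos
  set I : EuclideanSpace ℝ (Fin n) := ∫ x, f x • x with hIdef
  -- compute the gradient integral
  have hGval : (∫ x, f x • ((σ ^ 2)⁻¹ • (x - y)))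
      = (σ ^ 2)⁻¹ • (I - pσ y • y) := by
    have h1 : (fun x => f x • ((σ ^ 2)⁻¹ • (x - y)))
        = fun x => (σ ^ 2)⁻¹ • (f x • x - f x • y) := by
      funext x
      rw [smul_comm, smul_sub]
    rw [h1, integral_smul]
    congr 1
    rw [integral_sub (hInt y) (hI.smul_const y), integral_smul_const, hpσ y]
  -- gradient of log ∘ pσ
  have hF : HasFDerivAt pσ
      ((InnerProductSpace.toDual ℝ _) ((σ ^ 2)⁻¹ • (I - pσ y • y))) y := by
    have := (hgrad y).hasFDerivAt
    rwa [hGval] at this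
  have hlog : HasGradientAt (fun u => Real.log (pσ u))
      ((pσ y)⁻¹ • (σ ^ 2)⁻¹ • (I - pσ y • y)) y := by
    have hcomp := (Real.hasDerivAt_log hne).comp_hasFDerivAt y hF
    rw [hasGradientAt_iff_hasFDerivAt, _root_.map_smul]
    exact hcomp
  rw [hlog.gradient]
  -- algebra
  rw [hM y]
  have h2 : σ ^ 2 • (pσ y)⁻¹ • (σ ^ 2)⁻¹ • (I - pσ y • y)
      = (pσ y)⁻¹ • (I - pσ y • y) := by
    rw [smul_comm, smul_inv_smul₀ hσ2]
  rw [h2, smul_sub, smul_smul, inv_mul_cancel₀ hne, one_smul]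
  abel
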